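/- For every real p with 0 < p < 1: if x > 1 then W_p(x,1) ≤ L(x,1)², and if 0 < x < 1 then W_p(x,1) ≥ L(x,1)². -/

import Mathlib

open Real

lemma rpow_ge_one_add (x q : ℝ) (hx : 0 < x) : 1 + q * Real.log x ≤ x ^ q := by
  rw [Real.rpow_def_of_pos hx, mul_comm q (Real.log x)]
  have := Real.add_one_le_exp (Real.log x * q)
  linarith

theorem wyd_vs_log_mean_sq (p : ℝ) (hp0 : 0 < p) (hp1 : p < 1) :
    (∀ x : ℝ, 1 < x →
      p * (1 - p) * (x - 1) ^ 2 / ((x ^ p - 1) * (x ^ (1 - p) - 1)) ≤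
        ((x - 1) / Real.log x) ^ 2) ∧
    (∀ x : ℝ, 0 < x → x < 1 →
      p * (1 - p) * (x - 1) ^ 2 / ((x ^ p - 1) * (x ^ (1 - p) - 1)) ≥
        ((x - 1) / Real.log x) ^ 2) := by
  have hp1' : 0 < 1 - p := by linarith
  constructor
  · intro x hx
    have hx0 : 0 < x := by linarith
    have hL : 0 < Real.log x := Real.log_pos hx
    have hA : p * Real.log x ≤ x ^ p - 1 := by
      have := rpow_ge_one_add x p hx0; linarith
    have hB : (1 - p) * Real.log x ≤ x ^ (1 - p) - 1 := by
      have := rpow_ge_one_add x (1 - p) hx0; linarith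
    have hA0 : 0 < x ^ p - 1 := lt_of_lt_of_le (by positivity) hA
    have hB0 : 0 < x ^ (1 - p) - 1 := lt_of_lt_of_le (by positivity) hB
    have hden : p * (1 - p) * Real.log x ^ 2 ≤ (x ^ p - 1) * (x ^ (1 - p) - 1) := by
      calc p * (1 - p) * Real.log x ^ 2 = (p * Real.log x) * ((1 - p) * Real.log x) := by ring
        _ ≤ (x ^ p - 1) * (x ^ (1 - p) - 1) :=
          mul_le_mul hA hB (by positivity) (le_of_lt hA0)
    have hdpos : 0 < p * (1 - p) * Real.log x ^ 2 := by positivity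
    calc p * (1 - p) * (x - 1) ^ 2 / ((x ^ p - 1) * (x ^ (1 - p) - 1))
        ≤ p * (1 - p) * (x - 1) ^ 2 / (p * (1 - p) * Real.log x ^ 2) :=
          div_le_div_of_nonneg_left (by positivity) hdpos hden
      _ = ((x - 1) / Real.log x) ^ 2 := by
          field_simp
  · intro x hx0 hx1
    have hL : Real.log x < 0 := Real.log_neg hx0 hx1
    have hA : p * Real.log x ≤ x ^ p - 1 := by
      have := rpow_ge_one_add x p hx0; linarith
    have hB : (1 - p) * Real.log x ≤ x ^ (1 - p) - 1 := by
      have := rpow_ge_one_add x (1 - p) hx0; linarith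
    have hA1 : x ^ p < 1 := Real.rpow_lt_one (le_of_lt hx0) hx1 hp0
    have hB1 : x ^ (1 - p) < 1 := Real.rpow_lt_one (le_of_lt hx0) hx1 hp1'
    have hAB : 0 < (x ^ p - 1) * (x ^ (1 - p) - 1) := by
      have : 0 < (1 - x ^ p) * (1 - x ^ (1 - p)) := by
        apply mul_pos <;> linarith
      nlinarith
    have hden : (x ^ p - 1) * (x ^ (1 - p) - 1) ≤ p * (1 - p) * Real.log x ^ 2 := by
      have h1 : 1 - x ^ p ≤ -(p * Real.log x) := by linarith
      have h2 : 1 - x ^ (1 - p) ≤ -((1 - p) * Real.log x) := by linarith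
      have := mul_le_mul h1 h2 (by linarith) (by nlinarith)
      nlinarith
    calc ((x - 1) / Real.log x) ^ 2
        = p * (1 - p) * (x - 1) ^ 2 / (p * (1 - p) * Real.log x ^ 2) := by
          have h0 : p * (1 - p) ≠ 0 := by positivity
          rw [div_pow, eq_comm, mul_div_mul_left _ _ h0]
      _ ≤ p * (1 - p) * (x - 1) ^ 2 / ((x ^ p - 1) * (x ^ (1 - p) - 1)) :=
          div_le_div_of_nonneg_left (by positivity) hAB hden
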